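/- Let I be a (full-supported) matroidal ideal of degree d = 2 in R = k[x_1,...,x_n]. Then there exist subsets S_1,...,S_m of the variable set [n] = {x_1,...,x_n} such that: (i) m ≥ 2 and |S_i| ≥ 1 for each i; (ii) S_i ∩ S_j = ∅ for i ≠ j and S_1 ∪ ... ∪ S_m = [n]; (iii) for distinct variables x, y, the product xy ∈ I if and only if x ∈ S_i and y ∈ S_j for some i ≠ j; (iv) for distinct variables x, y, the product xy ∉ I if and only if x, y ∈ S_i for some i. -/

import Mathlib

open MvPolynomial

namespace PaperDefs

variable {k : Type*} [Field k] {n : ℕ}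

/-- The total degree of an exponent vector. -/
def edeg (a : Fin n →₀ ℕ) : ℕ := ∑ i, a i

/-- `I` is a monomial ideal: it is generated by a set of monomials. -/
def IsMonomialIdeal (I : Ideal (MvPolynomial (Fin n) k)) : Prop :=
  ∃ S : Set (Fin n →₀ ℕ),
    I = Ideal.span ((fun a => (MvPolynomial.monomial a (1 : k))) '' S)

/-- The (exponent vectors of the) unique minimal monomial generating set `G(I)`:
monomials of `I` that are minimal with respect to divisibility. -/
def minGens (I : Ideal (MvPolynomial (Fin n) k)) : Set (Fin n →₀ ℕ) :=
  {a | (MvPolynomial.monomial a (1 : k)) ∈ I ∧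
    ∀ b : Fin n →₀ ℕ, b < a → (MvPolynomial.monomial b (1 : k)) ∉ I}

/-- A squarefree exponent vector. -/
def SqFree (a : Fin n →₀ ℕ) : Prop := ∀ i, a i ≤ 1

/-- `I` is a polymatroidal ideal of degree `d`. -/
def IsPolymatroidal (I : Ideal (MvPolynomial (Fin n) k)) (d : ℕ) : Prop :=
  IsMonomialIdeal I ∧ I ≠ ⊥ ∧
  (∀ a ∈ minGens I, edeg a = d) ∧
  ∀ a ∈ minGens I, ∀ b ∈ minGens I, ∀ i : Fin n, b i < a i →
    ∃ j : Fin n, a j < b j ∧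
      (MvPolynomial.monomial (a - Finsupp.single i 1 + Finsupp.single j 1) (1 : k)) ∈ I

/-- `I` is a matroidal ideal of degree `d`: a squarefree polymatroidal ideal. -/
def IsMatroidal (I : Ideal (MvPolynomial (Fin n) k)) (d : ℕ) : Prop :=
  IsPolymatroidal I d ∧ ∀ a ∈ minGens I, SqFree a

/-- `I` is full-supported: every variable divides some minimal generator. -/
def FullSupported (I : Ideal (MvPolynomial (Fin n) k)) : Prop :=
  ∀ i : Fin n, ∃ a ∈ minGens I, a i ≠ 0

/-- The maximal graded ideal `(x_1, ..., x_n)`. -/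
noncomputable def varIdeal (k : Type*) [Field k] (n : ℕ) : Ideal (MvPolynomial (Fin n) k) :=
  Ideal.span (Set.range MvPolynomial.X)

/-- The colon ideal `(I : x_i)`. -/
noncomputable def colonVar (I : Ideal (MvPolynomial (Fin n) k)) (i : Fin n) :
    Ideal (MvPolynomial (Fin n) k) :=
  I.colon ((Ideal.span {MvPolynomial.X i} : Ideal (MvPolynomial (Fin n) k)) : Set (MvPolynomial (Fin n) k))

/-- The height of an ideal: the infimum of `Order.height` over the primes containing it. -/
noncomputable def ht {R : Type*} [CommRing R] (I : Ideal R) : ℕ∞ :=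
  ⨅ (p : PrimeSpectrum R) (_ : I ≤ p.asIdeal), Order.height p

/-- `I` is unmixed: all associated primes of `R/I` have the same height. -/
def IsUnmixed (I : Ideal (MvPolynomial (Fin n) k)) : Prop :=
  ∀ p ∈ associatedPrimes (MvPolynomial (Fin n) k) (MvPolynomial (Fin n) k ⧸ I),
    ∀ q ∈ associatedPrimes (MvPolynomial (Fin n) k) (MvPolynomial (Fin n) k ⧸ I),
      ht p = ht q

/-- The arithmetical rank of `I`. -/
noncomputable def ara (I : Ideal (MvPolynomial (Fin n) k)) : ℕ :=
  sInf {t : ℕ | ∃ f : Fin t → MvPolynomial (Fin n) k,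
    (Ideal.span (Set.range f)).radical = I.radical}

/-- The squarefree Veronese ideal of degree `d`. -/
noncomputable def sqfreeVeronese (k : Type*) [Field k] (n d : ℕ) : Ideal (MvPolynomial (Fin n) k) :=
  Ideal.span ((fun s : Finset (Fin n) => ∏ i ∈ s, MvPolynomial.X i) ''
    {s : Finset (Fin n) | s.card = d})

/-- The depth of `R/I` : the supremum of lengths of `R/I`-regular sequences consisting of
elements of the maximal graded ideal. -/
noncomputable def quotDepth (I : Ideal (MvPolynomial (Fin n) k)) : ℕ :=
  sSup {r : ℕ | ∃ rs : List (MvPolynomial (Fin n) k), rs.length = r ∧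
    (∀ x ∈ rs, x ∈ varIdeal k n) ∧
    RingTheory.Sequence.IsRegular (MvPolynomial (Fin n) k ⧸ I) rs}

/-- `R/I` is Cohen–Macaulay: the depth of `R/I` equals its Krull dimension. -/
def IsCohenMacaulayQuot (I : Ideal (MvPolynomial (Fin n) k)) : Prop :=
  (quotDepth I : WithBot ℕ∞) = ringKrullDim (MvPolynomial (Fin n) k ⧸ I)

end PaperDefs

open PaperDefs

section Aux
variable {k : Type*} [Field k] {n : ℕ}

lemma edeg_lt_of_lt {b c : Fin n →₀ ℕ} (h : b < c) : edeg b < edeg c := by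
  obtain ⟨hle, hne⟩ := lt_iff_le_and_ne.mp h
  obtain ⟨i, hi⟩ : ∃ i, b i ≠ c i := by
    by_contra hc; push_neg at hc; exact hne (Finsupp.ext hc)
  exact Finset.sum_lt_sum (fun j _ => Finsupp.le_def.mp hle j)
    ⟨i, Finset.mem_univ i, lt_of_le_of_ne (Finsupp.le_def.mp hle i) hi⟩

lemma eq_of_le_of_edeg_eq {b c : Fin n →₀ ℕ} (hle : b ≤ c) (h : edeg b = edeg c) : b = c := by
  by_contra hne
  exact absurd (edeg_lt_of_lt (lt_of_le_of_ne hle hne)) (by omega)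

lemma edeg_single (p : Fin n) : edeg (Finsupp.single p 1) = 1 := by
  simp [edeg, Finsupp.single_apply]

lemma edeg_add (a b : Fin n →₀ ℕ) : edeg (a + b) = edeg a + edeg b := by
  simp [edeg, Finset.sum_add_distrib]

lemma exists_minGen_le (I : Ideal (MvPolynomial (Fin n) k)) :
    ∀ (c : Fin n →₀ ℕ), monomial c (1:k) ∈ I → ∃ a ∈ minGens I, a ≤ c := by
  suffices H : ∀ N (c : Fin n →₀ ℕ), edeg c < N → monomial c (1:k) ∈ I →
      ∃ a ∈ minGens I, a ≤ c from fun c h => H (edeg c + 1) c (Nat.lt_succ_self _) h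
  intro N
  induction N with
  | zero => exact fun c hc => absurd hc (Nat.not_lt_zero _)
  | succ N ih =>
    intro c hc hmem
    by_cases hmin : ∀ b, b < c → monomial b (1:k) ∉ I
    · exact ⟨c, ⟨hmem, hmin⟩, le_rfl⟩
    · push_neg at hmin
      obtain ⟨b, hbc, hbI⟩ := hmin
      have hd := edeg_lt_of_lt hbc
      obtain ⟨a, ha, hab⟩ := ih b (by omega) hbI
      exact ⟨a, ha, hab.trans hbc.le⟩

lemma minGen_structure {a : Fin n →₀ ℕ} (hsf : SqFree a) (h2 : edeg a = 2) :
    ∃ p q : Fin n, p ≠ q ∧ a = Finsupp.single p 1 + Finsupp.single q 1 := by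
  have hsum : ∑ i ∈ a.support, a i = 2 := by
    rw [← h2, edeg]
    exact (Finset.sum_subset (Finset.subset_univ a.support)
      (fun i _ hi => Finsupp.notMem_support_iff.mp hi))
  have hone : ∀ i ∈ a.support, a i = 1 := fun i hi =>
    le_antisymm (hsf i) (Nat.one_le_iff_ne_zero.mpr (Finsupp.mem_support_iff.mp hi))
  rw [Finset.sum_congr rfl hone] at hsum
  simp only [Finset.sum_const, smul_eq_mul, mul_one] at hsum
  obtain ⟨p, q, hpq, hset⟩ := Finset.card_eq_two.mp hsum
  refine ⟨p, q, hpq, ?_⟩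
  ext i
  by_cases hip : i = p
  · subst hip
    have : a i = 1 := hone i (by rw [hset]; simp)
    simp [this, Finsupp.single_apply, hpq.symm]
  · by_cases hiq : i = q
    · subst hiq
      have : a i = 1 := hone i (by rw [hset]; simp)
      simp [this, Finsupp.single_apply, hpq, hip]
    · have : a i = 0 := by
        by_contra h
        have := Finsupp.mem_support_iff.mpr h
        rw [hset] at this
        simp at this
        tauto
      simp [this, Finsupp.single_apply, Ne.symm hip, Ne.symm hiq]

lemma X_mul_X (p q : Fin n) :
    (X p * X q : MvPolynomial (Fin n) k) =
      monomial (Finsupp.single p 1 + Finsupp.single q 1) (1:k) := by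
  rw [X, X, monomial_mul, one_mul]


lemma aux_pair_mem_iff {I : Ideal (MvPolynomial (Fin n) k)} (hI : IsMatroidal I 2)
    {p q : Fin n} (_hpq : p ≠ q) :
    (X p * X q : MvPolynomial (Fin n) k) ∈ I ↔
      (Finsupp.single p 1 + Finsupp.single q 1) ∈ minGens I := by
  rw [X_mul_X]
  constructor
  · intro h
    obtain ⟨a, ha, hle⟩ := exists_minGen_le I _ h
    have hdeg : edeg a = 2 := hI.1.2.2.1 a ha
    have hc : edeg (Finsupp.single p 1 + Finsupp.single q 1) = 2 := by
      rw [edeg_add, edeg_single, edeg_single]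
    rw [← eq_of_le_of_edeg_eq hle (by omega)]
    exact ha
  · exact fun h => h.1

lemma aux_trans {I : Ideal (MvPolynomial (Fin n) k)} (hI : IsMatroidal I 2)
    (hfull : FullSupported I) {p q r : Fin n}
    (hpq : p ≠ q) (hqr : q ≠ r) (hpr : p ≠ r)
    (h1 : (X p * X q : MvPolynomial (Fin n) k) ∉ I)
    (h2 : (X q * X r : MvPolynomial (Fin n) k) ∉ I) :
    (X p * X r : MvPolynomial (Fin n) k) ∉ I := by
  intro hmem
  have hc : (Finsupp.single p 1 + Finsupp.single r 1) ∈ minGens I :=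
    (aux_pair_mem_iff hI hpr).mp hmem
  obtain ⟨b, hb, hbq⟩ := hfull q
  obtain ⟨u, v, huv, hbe⟩ := minGen_structure (hI.2 b hb) (hI.1.2.2.1 b hb)
  have hsex : ∃ s, s ≠ q ∧ b = Finsupp.single q 1 + Finsupp.single s 1 := by
    subst hbe
    simp only [Finsupp.add_apply, Finsupp.single_apply] at hbq
    by_cases huq : u = q
    · exact ⟨v, fun h => huv (huq.trans h.symm), by rw [huq]⟩
    · by_cases hvq : v = q
      · exact ⟨u, fun h => huv (h.trans hvq.symm), by rw [hvq, add_comm]⟩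
      · simp [huq, hvq] at hbq
  obtain ⟨s, hsq, hbe2⟩ := hsex
  have hsp : s ≠ p := by
    rintro rfl
    apply h1
    rw [X_mul_X, add_comm, ← hbe2]
    exact hb.1
  have hsr : s ≠ r := by
    rintro rfl
    apply h2
    rw [X_mul_X, ← hbe2]
    exact hb.1
  obtain ⟨j, hj1, hj2⟩ := hI.1.2.2.2 b hb _ hc s
    (by
      rw [hbe2]
      simp [Finsupp.single_apply, Ne.symm hsp, Ne.symm hsr, Ne.symm hsq])
  have hj : j = p ∨ j = r := by
    by_contra h
    push_neg at h
    simp [Finsupp.single_apply, Ne.symm h.1, Ne.symm h.2] at hj1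
  have hbs : b - Finsupp.single s 1 = Finsupp.single q 1 := by
    rw [hbe2, add_tsub_cancel_right]
  rw [hbs] at hj2
  rcases hj with rfl | rfl
  · exact h1 (by rw [X_mul_X, add_comm]; exact hj2)
  · exact h2 (by rw [X_mul_X]; exact hj2)

lemma aux_exists_gen {I : Ideal (MvPolynomial (Fin n) k)} (hI : IsMatroidal I 2) :
    ∃ p q : Fin n, p ≠ q ∧ (X p * X q : MvPolynomial (Fin n) k) ∈ I := by
  obtain ⟨S, hS⟩ := hI.1.1
  have hSne : ∃ s, s ∈ S := by
    by_contra h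
    push_neg at h
    apply hI.1.2.1
    rw [hS, Set.eq_empty_iff_forall_notMem.mpr h, Set.image_empty, Ideal.span_empty]
  obtain ⟨s, hs⟩ := hSne
  have hsI : monomial s (1:k) ∈ I := hS ▸ Ideal.subset_span ⟨s, hs, rfl⟩
  obtain ⟨a, ha, _⟩ := exists_minGen_le I s hsI
  obtain ⟨p, q, hpq, hae⟩ := minGen_structure (hI.2 a ha) (hI.1.2.2.1 a ha)
  exact ⟨p, q, hpq, (aux_pair_mem_iff hI hpq).mpr (hae ▸ ha)⟩

end Aux


open PaperDefs in
/-- Theorem 1.2. If `I` is a full-supported matroidal ideal of degree `2`,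
then the variable set admits a partition `S_1, ..., S_m` with `m ≥ 2`, nonempty pairwise
disjoint covering blocks, such that `x·y ∈ I` iff `x` and `y` lie in different blocks, and
`x·y ∉ I` iff `x` and `y` lie in the same block. -/
theorem statement2 {k : Type*} [Field k] {n : ℕ}
    (I : Ideal (MvPolynomial (Fin n) k))
    (hI : IsMatroidal I 2) (hfull : FullSupported I) :
    ∃ (m : ℕ) (S : Fin m → Finset (Fin n)),
      (2 ≤ m ∧ ∀ i, (S i).Nonempty) ∧
      ((∀ i j, i ≠ j → Disjoint (S i) (S j)) ∧ ∀ p : Fin n, ∃ i, p ∈ S i) ∧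
      (∀ p q : Fin n, p ≠ q →
        (MvPolynomial.X p * MvPolynomial.X q ∈ I ↔
          ∃ i j, i ≠ j ∧ p ∈ S i ∧ q ∈ S j)) ∧
      (∀ p q : Fin n, p ≠ q →
        (MvPolynomial.X p * MvPolynomial.X q ∉ I ↔ ∃ i, p ∈ S i ∧ q ∈ S i)) := by
  classical
  set rel : Fin n → Fin n → Prop :=
    fun p q => p = q ∨ (X p * X q : MvPolynomial (Fin n) k) ∉ I with hrel
  have hsymm : ∀ {p q : Fin n}, rel p q → rel q p := by
    rintro p q (rfl | h)
    · exact Or.inl rfl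
    · exact Or.inr (by rwa [mul_comm])
  have htrans : ∀ {p q r : Fin n}, rel p q → rel q r → rel p r := by
    rintro p q r (rfl | h1) hq
    · exact hq
    · rcases hq with rfl | h2
      · exact Or.inr h1
      · by_cases hpq : p = q
        · subst hpq; exact Or.inr h2
        · by_cases hqr : q = r
          · subst hqr; exact Or.inr h1
          · by_cases hpr : p = r
            · exact Or.inl hpr
            · exact Or.inr (aux_trans hI hfull hpq hqr hpr h1 h2)
  let st : Setoid (Fin n) := ⟨rel, fun _ => Or.inl rfl, hsymm, htrans⟩
  haveI : DecidableRel st.r := fun _ _ => Classical.dec _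
  let m := Fintype.card (Quotient st)
  let e : Quotient st ≃ Fin m := Fintype.equivFin _
  have hrelated : ∀ {p q : Fin n},
      e (Quotient.mk st p) = e (Quotient.mk st q) ↔ rel p q := by
    intro p q
    rw [e.apply_eq_iff_eq]
    exact ⟨fun h => Quotient.exact h, fun h => Quotient.sound h⟩
  refine ⟨m, fun i => Finset.univ.filter (fun p => e (Quotient.mk st p) = i),
    ⟨?_, ?_⟩, ⟨?_, ?_⟩, ?_, ?_⟩
  · -- 2 ≤ m
    obtain ⟨p, q, hpq, hmem⟩ := aux_exists_gen hI
    have hne : Quotient.mk st p ≠ Quotient.mk st q := by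
      intro h
      rcases Quotient.exact h with h' | h'
      · exact hpq h'
      · exact h' hmem
    exact Fintype.one_lt_card_iff.mpr ⟨Quotient.mk st p, Quotient.mk st q, hne⟩
  · -- nonempty blocks
    intro i
    obtain ⟨x, hx⟩ := Quotient.exists_rep (e.symm i)
    refine ⟨x, Finset.mem_filter.mpr ⟨Finset.mem_univ _, ?_⟩⟩
    rw [hx, Equiv.apply_symm_apply]
  · -- disjoint
    intro i j hij
    rw [Finset.disjoint_left]
    intro p hp hp'
    rw [Finset.mem_filter] at hp hp'
    exact hij (hp.2 ▸ hp'.2)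
  · -- cover
    intro p
    exact ⟨e (Quotient.mk st p), Finset.mem_filter.mpr ⟨Finset.mem_univ _, rfl⟩⟩
  · -- (iii)
    intro p q hpq
    constructor
    · intro hmem
      refine ⟨e (Quotient.mk st p), e (Quotient.mk st q), ?_,
        Finset.mem_filter.mpr ⟨Finset.mem_univ _, rfl⟩,
        Finset.mem_filter.mpr ⟨Finset.mem_univ _, rfl⟩⟩
      intro h
      rcases hrelated.mp h with h' | h'
      · exact hpq h'
      · exact h' hmem
    · rintro ⟨i, j, hij, hp, hq⟩
      rw [Finset.mem_filter] at hp hq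
      by_contra hITmem
      apply hij
      rw [← hp.2, ← hq.2]
      exact hrelated.mpr (Or.inr hITmem)
  · -- (iv)
    intro p q hpq
    constructor
    · intro hnm
      refine ⟨e (Quotient.mk st p),
        Finset.mem_filter.mpr ⟨Finset.mem_univ _, rfl⟩,
        Finset.mem_filter.mpr ⟨Finset.mem_univ _, ?_⟩⟩
      exact (hrelated.mpr (Or.inr hnm)).symm
    · rintro ⟨i, hp, hq⟩
      rw [Finset.mem_filter] at hp hq
      have : rel p q := hrelated.mp (hp.2.trans hq.2.symm)
      rcases this with h | h
      · exact absurd h hpq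
      · exact h
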